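/- Let Z be a Hausdorff topological space with no isolated points and let f_1,…,f_N be continuous self-maps of Z. Then f_1,…,f_N are disjoint weakly mixing of order r if and only if the family A consisting of all subsets of ℕ that contain an intersection of r disjoint return sets (i.e., all sets of the form A_1 ∩ … ∩ A_r with each A_j a superset of some disjoint return set) is a Furstenberg family. In that case, f_1,…,f_N are disjoint A-transitive. -/
import Mathlib


/-- The disjoint return set `d-N(U₀; U₁,…,U_N)` of the tuple `f`. -/
def dRet {Z : Type*} {N : ℕ} (f : Fin N → Z → Z) (U0 : Set Z) (U : Fin N → Set Z) :
    Set ℕ :=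
  {m | ∃ z ∈ U0, ∀ i, (f i)^[m] z ∈ U i}

/-- The tuple `f 1,…,f N` is disjoint transitive: every disjoint return set is nonempty. -/
def dTrans {Z : Type*} [TopologicalSpace Z] {N : ℕ} (f : Fin N → Z → Z) : Prop :=
  ∀ (U0 : Set Z) (U : Fin N → Set Z), IsOpen U0 → U0.Nonempty →
    (∀ i, IsOpen (U i)) → (∀ i, (U i).Nonempty) → (dRet f U0 U).Nonempty

/-- The `r`-fold product map `g × ⋯ × g` on `Z^r`. -/
def prodPow {Z : Type*} (r : ℕ) (g : Z → Z) : (Fin r → Z) → (Fin r → Z) :=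
  fun x j => g (x j)

/-- The tuple `f 1,…,f N` is disjoint weakly mixing of order `r`: the `N`-tuple of the
`r`-fold products `f i × ⋯ × f i` on `Z^r` is disjoint transitive. -/
def dWM {Z : Type*} [TopologicalSpace Z] {N : ℕ} (r : ℕ) (f : Fin N → Z → Z) : Prop :=
  dTrans (fun i => prodPow r (f i))

lemma prodPow_iterate {Z : Type*} (r : ℕ) (g : Z → Z) (m : ℕ) :
    (prodPow r g)^[m] = fun x j => g^[m] (x j) := by
  induction m with
  | zero => rfl
  | succ m ih =>
      funext x j
      simp [Function.iterate_succ_apply', ih, prodPow]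

lemma exists_box {Z : Type*} [TopologicalSpace Z] {r : ℕ} (s : Set (Fin r → Z))
    (hs : IsOpen s) (hne : s.Nonempty) :
    ∃ W : Fin r → Set Z, (∀ j, IsOpen (W j)) ∧ (∀ j, (W j).Nonempty) ∧
      Set.univ.pi W ⊆ s := by
  obtain ⟨a, ha⟩ := hne
  obtain ⟨I, t, ht, hsub⟩ := isOpen_pi_iff.mp hs a ha
  classical
  refine ⟨fun j => if j ∈ I then t j else Set.univ, ?_, ?_, ?_⟩
  · intro j; dsimp only; split_ifs with h
    · exact (ht j h).1
    · exact isOpen_univ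
  · intro j; dsimp only; split_ifs with h
    · exact ⟨a j, (ht j h).2⟩
    · exact ⟨a j, trivial⟩
  · intro x hx
    apply hsub
    intro j hj
    have hji : j ∈ I := hj
    have := hx j (Set.mem_univ j)
    simpa [hji] using this

lemma dRet_mono {Z : Type*} {N : ℕ} (f : Fin N → Z → Z) {U0 U0' : Set Z}
    {U U' : Fin N → Set Z} (h0 : U0 ⊆ U0') (h : ∀ i, U i ⊆ U' i) :
    dRet f U0 U ⊆ dRet f U0' U' := by
  rintro m ⟨z, hz, hzi⟩
  exact ⟨z, h0 hz, fun i => h i (hzi i)⟩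

lemma dWM_iff {Z : Type*} [TopologicalSpace Z] {N : ℕ} (r : ℕ) (f : Fin N → Z → Z) :
    dWM r f ↔ ∀ (U0 : Fin r → Set Z) (U : Fin r → Fin N → Set Z),
      (∀ j, IsOpen (U0 j)) → (∀ j, (U0 j).Nonempty) →
      (∀ j i, IsOpen (U j i)) → (∀ j i, (U j i).Nonempty) →
      (⋂ j, dRet f (U0 j) (U j)).Nonempty := by
  constructor
  · intro h U0 U hO0 hN0 hOU hNU
    obtain ⟨m, z, hz0, hzi⟩ := h (Set.univ.pi U0) (fun i => Set.univ.pi fun j => U j i)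
      (isOpen_set_pi Set.finite_univ fun j _ => hO0 j)
      (Set.univ_pi_nonempty_iff.mpr hN0)
      (fun i => isOpen_set_pi Set.finite_univ fun j _ => hOU j i)
      (fun i => Set.univ_pi_nonempty_iff.mpr fun j => hNU j i)
    refine ⟨m, Set.mem_iInter.mpr fun j => ⟨z j, hz0 j (Set.mem_univ j), fun i => ?_⟩⟩
    have := hzi i j (Set.mem_univ j)
    rwa [prodPow_iterate] at this
  · intro h V0 V hV0 hV0ne hV hVne
    obtain ⟨W0, hW0o, hW0n, hW0s⟩ := exists_box V0 hV0 hV0ne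
    choose W hWo hWn hWs using fun i => exists_box (V i) (hV i) (hVne i)
    obtain ⟨m, hm⟩ := h W0 (fun j i => W i j) hW0o hW0n (fun j i => hWo i j)
      (fun j i => hWn i j)
    choose z hz1 hz2 using fun j => (Set.mem_iInter.mp hm j)
    refine ⟨m, z, hW0s fun j _ => hz1 j, fun i => hWs i fun j _ => ?_⟩
    rw [prodPow_iterate]
    exact hz2 j i

lemma kill_one {Z : Type*} [TopologicalSpace Z] [T2Space Z]
    (hiso : ∀ z : Z, ¬ IsOpen ({z} : Set Z))
    (g : Z → Z) (hg : Continuous g) (V0 V1 : Set Z)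
    (h0 : IsOpen V0) (h0n : V0.Nonempty) (h1 : IsOpen V1) (h1n : V1.Nonempty) :
    ∃ V0' V1', IsOpen V0' ∧ V0'.Nonempty ∧ V0' ⊆ V0 ∧
      IsOpen V1' ∧ V1'.Nonempty ∧ V1' ⊆ V1 ∧ ∀ z ∈ V0', g z ∉ V1' := by
  obtain ⟨x, hx⟩ := h0n
  have hy : ∃ y ∈ V1, y ≠ g x := by
    by_contra hc
    push_neg at hc
    have hVs : V1 = {g x} := by
      apply Set.eq_singleton_iff_nonempty_unique_mem.mpr ⟨h1n, hc⟩
    exact hiso (g x) (hVs ▸ h1)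
  obtain ⟨y, hy1, hyne⟩ := hy
  obtain ⟨Wy, Wx, hWyo, hWxo, hyW, hxW, hdisj⟩ := t2_separation hyne
  refine ⟨V0 ∩ g ⁻¹' Wx, V1 ∩ Wy, h0.inter (hWxo.preimage hg), ⟨x, hx, hxW⟩,
    Set.inter_subset_left, h1.inter hWyo, ⟨y, hy1, hyW⟩, Set.inter_subset_left, ?_⟩
  rintro z ⟨_, hzW⟩ ⟨_, hgz⟩
  exact Set.disjoint_left.mp hdisj hgz hzW

lemma kill_many {Z : Type*} [TopologicalSpace Z] [T2Space Z]
    (hiso : ∀ z : Z, ¬ IsOpen ({z} : Set Z))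
    (g : Z → Z) (hg : Continuous g) (V0 V1 : Set Z)
    (h0 : IsOpen V0) (h0n : V0.Nonempty) (h1 : IsOpen V1) (h1n : V1.Nonempty) (M : ℕ) :
    ∃ V0' V1', IsOpen V0' ∧ V0'.Nonempty ∧ V0' ⊆ V0 ∧
      IsOpen V1' ∧ V1'.Nonempty ∧ V1' ⊆ V1 ∧ ∀ n ≤ M, ∀ z ∈ V0', g^[n] z ∉ V1' := by
  induction M with
  | zero =>
      obtain ⟨A, B, hAo, hAn, hAs, hBo, hBn, hBs, hk⟩ :=
        kill_one hiso (g^[0]) (hg.iterate 0) V0 V1 h0 h0n h1 h1n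
      exact ⟨A, B, hAo, hAn, hAs, hBo, hBn, hBs, fun n hn => by
        interval_cases n; exact hk⟩
  | succ M ih =>
      obtain ⟨A, B, hAo, hAn, hAs, hBo, hBn, hBs, hk⟩ := ih
      obtain ⟨A', B', hAo', hAn', hAs', hBo', hBn', hBs', hk'⟩ :=
        kill_one hiso (g^[M+1]) (hg.iterate (M+1)) A B hAo hAn hBo hBn
      refine ⟨A', B', hAo', hAn', hAs'.trans hAs, hBo', hBn', hBs'.trans hBs, ?_⟩
      intro n hn z hz
      rcases Nat.lt_succ_iff_lt_or_eq.mp (Nat.lt_succ_of_le hn) with h | h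
      · exact fun hb => hk n (Nat.lt_succ_iff.mp h) z (hAs' hz) (hBs' hb)
      · subst h; exact hk' z hz

lemma inter_infinite {Z : Type*} [TopologicalSpace Z] [T2Space Z]
    (hiso : ∀ z : Z, ¬ IsOpen ({z} : Set Z))
    {N : ℕ} {r : ℕ} (hr : 1 ≤ r) (f : Fin N → Z → Z) (hf : ∀ i, Continuous (f i))
    (hwm : dWM r f)
    (U0 : Fin r → Set Z) (U : Fin r → Fin N → Set Z)
    (hO0 : ∀ j, IsOpen (U0 j)) (hN0 : ∀ j, (U0 j).Nonempty)
    (hOU : ∀ j i, IsOpen (U j i)) (hNU : ∀ j i, (U j i).Nonempty) :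
    (⋂ j, dRet f (U0 j) (U j)).Infinite := by
  rcases Nat.eq_zero_or_pos N with hN | hN
  · subst hN
    have : (⋂ j, dRet f (U0 j) (U j)) = Set.univ := by
      apply Set.eq_univ_iff_forall.mpr
      intro m
      refine Set.mem_iInter.mpr fun j => ?_
      obtain ⟨z, hz⟩ := hN0 j
      exact ⟨z, hz, fun i => i.elim0⟩
    rw [this]; exact Set.infinite_univ
  · set i0 : Fin N := ⟨0, hN⟩
    set j0 : Fin r := ⟨0, hr⟩
    by_contra hfin
    rw [Set.not_infinite] at hfin
    obtain ⟨M, hM⟩ := hfin.bddAbove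
    obtain ⟨A, B, hAo, hAn, hAs, hBo, hBn, hBs, hk⟩ :=
      kill_many hiso (f i0) (hf i0) (U0 j0) (U j0 i0) (hO0 j0) (hN0 j0) (hOU j0 i0)
        (hNU j0 i0) M
    classical
    set U0' : Fin r → Set Z := fun j => if j = j0 then A else U0 j with hU0'
    set U' : Fin r → Fin N → Set Z := fun j i => if j = j0 ∧ i = i0 then B else U j i with hU'
    obtain ⟨m, hm⟩ := (dWM_iff r f).mp hwm U0' U'
      (fun j => by simp only [hU0']; split_ifs; exacts [hAo, hO0 j])
      (fun j => by simp only [hU0']; split_ifs; exacts [hAn, hN0 j])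
      (fun j i => by simp only [hU']; split_ifs; exacts [hBo, hOU j i])
      (fun j i => by simp only [hU']; split_ifs; exacts [hBn, hNU j i])
    have hsub0 : ∀ j, U0' j ⊆ U0 j := fun j => by
      simp only [hU0']; split_ifs with h
      · subst h; exact hAs
      · exact le_refl _
    have hsub : ∀ j i, U' j i ⊆ U j i := fun j i => by
      simp only [hU']; split_ifs with h
      · obtain ⟨h1, h2⟩ := h; subst h1; subst h2; exact hBs
      · exact le_refl _
    have hmem : m ∈ ⋂ j, dRet f (U0 j) (U j) :=
      Set.mem_iInter.mpr fun j => dRet_mono f (hsub0 j) (hsub j) (Set.mem_iInter.mp hm j)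
    have hle : m ≤ M := hM hmem
    obtain ⟨z, hz0, hzi⟩ := Set.mem_iInter.mp hm j0
    have h1 : z ∈ A := by simpa [hU0'] using hz0
    have h2 : (f i0)^[m] z ∈ B := by simpa [hU'] using hzi i0
    exact hk m hle z h1 h2

/-- Let `Z` be Hausdorff with no isolated points and `f 1,…,f N`
continuous.  Then `f 1,…,f N` are disjoint weakly mixing of order `r` iff the family
`𝒜` of all subsets of `ℕ` containing an intersection of `r` disjoint return sets is a
Furstenberg family (every member infinite; upward closed).  In that case, `f 1,…,f N`
are disjoint `𝒜`-transitive. -/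
theorem stmt_5 {Z : Type*} [TopologicalSpace Z] [T2Space Z]
    (hiso : ∀ z : Z, ¬ IsOpen ({z} : Set Z))
    {N : ℕ} (r : ℕ) (hr : 1 ≤ r) (f : Fin N → Z → Z) (hf : ∀ i, Continuous (f i))
    (𝒜 : Set (Set ℕ))
    (h𝒜 : 𝒜 = {B : Set ℕ | ∃ (U0 : Fin r → Set Z) (U : Fin r → Fin N → Set Z),
        (∀ j, IsOpen (U0 j)) ∧ (∀ j, (U0 j).Nonempty) ∧
        (∀ j i, IsOpen (U j i)) ∧ (∀ j i, (U j i).Nonempty) ∧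
        (⋂ j, dRet f (U0 j) (U j)) ⊆ B}) :
    (dWM r f ↔
      ((∀ B ∈ 𝒜, B.Infinite) ∧ ∀ B C : Set ℕ, B ∈ 𝒜 → B ⊆ C → C ∈ 𝒜))
    ∧ (dWM r f →
      ∀ (U0 : Set Z) (U : Fin N → Set Z), IsOpen U0 → U0.Nonempty →
        (∀ i, IsOpen (U i)) → (∀ i, (U i).Nonempty) → dRet f U0 U ∈ 𝒜) := by
  subst h𝒜
  constructor
  · constructor
    · intro hwm
      constructor
      · rintro B ⟨U0, U, hO0, hN0, hOU, hNU, hsub⟩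
        exact (inter_infinite hiso hr f hf hwm U0 U hO0 hN0 hOU hNU).mono hsub
      · rintro B C ⟨U0, U, hO0, hN0, hOU, hNU, hsub⟩ hBC
        exact ⟨U0, U, hO0, hN0, hOU, hNU, hsub.trans hBC⟩
    · rintro ⟨hinf, -⟩
      rw [dWM_iff]
      intro U0 U hO0 hN0 hOU hNU
      exact (hinf _ ⟨U0, U, hO0, hN0, hOU, hNU, subset_rfl⟩).nonempty
  · intro _ U0 U hO0 hN0 hOU hNU
    exact ⟨fun _ => U0, fun _ => U, fun _ => hO0, fun _ => hN0, fun _ _ => hOU _,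
      fun _ _ => hNU _, Set.iInter_subset _ ⟨0, hr⟩⟩
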